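/- Let ⟨𝒬, Q₀⟩ be the instance produced by the reduction from an OGTP instance ⟨𝒮, ℱ⟩, and suppose H is a final position of a play of Escape(Q₀, 𝒬) that started from D₀ = (G(q))[a,b] with q ∈ Q_start. Then: (1) every edge of H labeled with G(α), R(α), G(β) or R(β) begins in a; (2) every edge of H labeled with G(ω) or R(ω) ends in b. -/

import Mathlib

/-- A graph database (structure) over vertex type `V` and edge-label alphabet `γ`:
`D x c y` means that there is an edge from `x` to `y` labeled with `c`. -/
def DB (V γ : Type) : Type := V → γ → V → Prop

/-- `pathSat D x w y` : the structure `D` satisfies `w(x,y)`, i.e. there is a directed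
path from `x` to `y` whose consecutive edge labels spell the word `w`. -/
def pathSat {V γ : Type} (D : DB V γ) : V → List γ → V → Prop
  | x, [], y => x = y
  | x, c :: w, y => ∃ z, D x c z ∧ pathSat D z w y

/-- `D ⊨ L(x,y)` for a language `L` : some word of `L` labels a path from `x` to `y`. -/
def langSat {V γ : Type} (D : DB V γ) (L : Language γ) (x y : V) : Prop :=
  ∃ w ∈ L, pathSat D x w y

/-- The answer `L(D)` of the path query given by the language `L` on the database `D`. -/
def qry {V γ : Type} (L : Language γ) (D : DB V γ) : Set (V × V) :=
  { p | langSat D L p.1 p.2 }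

/-- All edge labels of `D` lie in the set `A`. -/
def labelsIn {V γ : Type} (D : DB V γ) (A : Set γ) : Prop :=
  ∀ x c y, D x c y → c ∈ A

/-- A language is regular iff it is the language of some regular expression. -/
def IsRegularLang {γ : Type} (L : Language γ) : Prop :=
  ∃ r : RegularExpression γ, r.matches' = L

/-! ### Red-green signature.  A letter of `Σ̄` is a pair `(color, a)` with
`color = true` meaning green and `color = false` meaning red. -/

/-- The green copy `G(w)` of a word `w`. -/
def greenW {γ : Type} (w : List γ) : List (Bool × γ) := w.map (fun c => (true, c))

/-- The red copy `R(w)` of a word `w`. -/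
def redW {γ : Type} (w : List γ) : List (Bool × γ) := w.map (fun c => (false, c))

/-- The green copy `G(L)` of a language `L`. -/
def greenL {γ : Type} (L : Language γ) : Language (Bool × γ) := greenW '' L

/-- The red copy `R(L)` of a language `L`. -/
def redL {γ : Type} (L : Language γ) : Language (Bool × γ) := redW '' L

/-- A constraint `L → L'` given by a pair of languages,
meaning `∀ x y, L(x,y) ⇒ L'(x,y)`. -/
structure RCon (γ : Type) where
  lhs : Language γ
  rhs : Language γ

/-- `D ⊨ t` for a single constraint `t`. -/
def satRC {V γ : Type} (D : DB V γ) (t : RCon γ) : Prop :=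
  ∀ x y, langSat D t.lhs x y → langSat D t.rhs x y

/-- `D ⊨ T` for a set `T` of constraints. -/
def satRCs {V γ : Type} (D : DB V γ) (T : Set (RCon γ)) : Prop :=
  ∀ t ∈ T, satRC D t

/-- `L→`, the regular constraint `G(L) → R(L)`. -/
def rcFwd {γ : Type} (L : Language γ) : RCon (Bool × γ) := ⟨greenL L, redL L⟩

/-- `L←`, the regular constraint `R(L) → G(L)`. -/
def rcBwd {γ : Type} (L : Language γ) : RCon (Bool × γ) := ⟨redL L, greenL L⟩

/-- `𝒬↔ = ⋃_{L ∈ 𝒬} {L→, L←}`. -/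
def biRC {γ : Type} (Qs : Set (Language γ)) : Set (RCon (Bool × γ)) :=
  rcFwd '' Qs ∪ rcBwd '' Qs

/-- A request is a triple `⟨x, y, t⟩`. -/
abbrev Req (V γ : Type) := V × V × RCon γ

/-- `rq T D` : the set of requests `⟨x,y,L→L'⟩` with `L → L' ∈ T`, `D ⊨ L(x,y)`
and `D ⊭ L'(x,y)`. -/
def rq {V γ : Type} (T : Set (RCon γ)) (D : DB V γ) : Set (Req V γ) :=
  { r | r.2.2 ∈ T ∧ langSat D r.2.2.lhs r.1 r.2.1 ∧ ¬ langSat D r.2.2.rhs r.1 r.2.1 }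

/-- A vertex of (i.e. active in) the structure `D`. -/
def activeV {V γ : Type} (D : DB V γ) (v : V) : Prop :=
  ∃ c u, D v c u ∨ D u c v

/-- The edge set of a chain whose consecutive vertices are listed in the first argument
and whose edge labels spell the second argument.  -/
def chainOf {V γ : Type} : List V → List γ → DB V γ
  | u :: v :: vs, c :: w => fun p d q => (p = u ∧ d = c ∧ q = v) ∨ chainOf (v :: vs) w p d q
  | _, _ => fun _ _ _ => False

/-- `D` is (exactly) the chain structure `w[x,y]` : its edges form a chain from `x` to `y`
labeled `w`, whose internal vertices are pairwise distinct and distinct from `x, y`. -/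
def IsChainStruct {V γ : Type} (D : DB V γ) (x : V) (w : List γ) (y : V) : Prop :=
  ∃ vs : List V, vs.length + 1 = w.length ∧ (x :: vs ++ [y]).Nodup ∧
    ∀ p c q, D p c q ↔ chainOf (x :: vs ++ [y]) w p c q

/-- `Step T D D'` : `D'` is obtained from `D` by simultaneously satisfying every request of
`rq T D` : for each request `⟨x,y,t⟩` a word `w` of the right-hand side of `t` is chosen and a
fresh path `w[x,y]` is added, the internal vertices of all the added paths being new
(not vertices of `D`) and pairwise distinct. -/
def Step {V γ : Type} (T : Set (RCon γ)) (D D' : DB V γ) : Prop :=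
  ∃ (wch : Req V γ → List γ) (vch : Req V γ → List V),
    (∀ r ∈ rq T D,
      wch r ∈ (r.2.2).rhs ∧ (vch r).length + 1 = (wch r).length ∧ (vch r).Nodup ∧
      ∀ v ∈ vch r, ¬ activeV D v ∧ v ≠ r.1 ∧ v ≠ r.2.1) ∧
    (∀ r ∈ rq T D, ∀ r' ∈ rq T D, r ≠ r' → ∀ v ∈ vch r, v ∉ vch r') ∧
    ∀ p c q, D' p c q ↔
      (D p c q ∨ ∃ r ∈ rq T D, chainOf (r.1 :: vch r ++ [r.2.1]) (wch r) p c q)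

/-- `H ∈ Ω(T, D₀)` : `H` is a final position, namely the union of a play
`D₀, D₁, D₂, …` with `Step T Dᵢ Dᵢ₊₁` for all `i`. -/
def FinalPos {V γ : Type} (T : Set (RCon γ)) (D₀ H : DB V γ) : Prop :=
  ∃ seq : ℕ → DB V γ, seq 0 = D₀ ∧ (∀ i, Step T (seq i) (seq (i + 1))) ∧
    ∀ p c q, H p c q ↔ ∃ i, seq i p c q

/-- `h` is a homomorphism from `D` to `M`. -/
def IsHom {V W γ : Type} (D : DB V γ) (M : DB W γ) (h : V → W) : Prop :=
  ∀ x c y, D x c y → M (h x) c (h y)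

/-! ### The alphabet of the reduction.
`Σ = {α, β, ω} ∪ Σ₀` with `Σ₀ = {A,B} × {H,V} × {W,C} × 𝒮`.
Conventions: in `Sig.base ab dir temp shade`,
`ab = true` means `A` and `ab = false` means `B`;
`dir = false` means `H` (horizontal) and `dir = true` means `V` (vertical);
`temp = true` means `W` (warm) and `temp = false` means `C` (cold);
shades are natural numbers, `black := 0`. -/
inductive Sig : Type where
  | alpha : Sig
  | beta : Sig
  | omega : Sig
  | base : Bool → Bool → Bool → ℕ → Sig
deriving DecidableEq

/-- `c` is a letter of `Σ₀` (its shade belonging to `S`). -/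
def inSigma0 (S : Finset ℕ) : Sig → Prop
  | .base _ _ _ s => s ∈ S
  | _ => False

/-- `c` is a letter of `Σ₀` with the indicated first three components
(its shade ranging over `S`). -/
def isL (S : Finset ℕ) (ab dir temp : Bool) (c : Sig) : Prop :=
  ∃ s ∈ S, c = Sig.base ab dir temp s

/-- All letters of the word `u` belong to `Σ₀`. -/
def allS0 (S : Finset ℕ) (u : List Sig) : Prop := ∀ c ∈ u, inSigma0 S c

/-- `Q¹ = ω`. -/
def Qg1 : Language Sig := {[Sig.omega]}

/-- `Q² = α + β`. -/
def Qg2 : Language Sig := {[Sig.alpha], [Sig.beta]}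

/-- `[B H W][A V W]`, the first summand of `Q³`. -/
def Qg3a (S : Finset ℕ) : Language Sig :=
  { w | ∃ c1 c2, w = [c1, c2] ∧ isL S false false true c1 ∧ isL S true true true c2 }

/-- `[B V C][A H C]`, the second summand of `Q³`. -/
def Qg3b (S : Finset ℕ) : Language Sig :=
  { w | ∃ c1 c2, w = [c1, c2] ∧ isL S false true false c1 ∧ isL S true false false c2 }

/-- `[A H C][B V C]`, the first summand of `Q⁴`. -/
def Qg4a (S : Finset ℕ) : Language Sig :=
  { w | ∃ c1 c2, w = [c1, c2] ∧ isL S true false false c1 ∧ isL S false true false c2 }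

/-- `[A V W][B H W]`, the second summand of `Q⁴`. -/
def Qg4b (S : Finset ℕ) : Language Sig :=
  { w | ∃ c1 c2, w = [c1, c2] ∧ isL S true true true c1 ∧ isL S false false true c2 }

/-- `[B V C]`, the first summand of `Q⁵`. -/
def Qg5a (S : Finset ℕ) : Language Sig := { w | ∃ c, w = [c] ∧ isL S false true false c }

/-- `[B V W]`, the second summand of `Q⁵`. -/
def Qg5b (S : Finset ℕ) : Language Sig := { w | ∃ c, w = [c] ∧ isL S false true true c }

/-- `[B H W]`, the first summand of `Q⁶`. -/
def Qg6a (S : Finset ℕ) : Language Sig := { w | ∃ c, w = [c] ∧ isL S false false true c }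

/-- `[B H C]`, the second summand of `Q⁶`. -/
def Qg6b (S : Finset ℕ) : Language Sig := { w | ∃ c, w = [c] ∧ isL S false false false c }

/-- `[A V W]`, the first summand of `Q⁷`. -/
def Qg7a (S : Finset ℕ) : Language Sig := { w | ∃ c, w = [c] ∧ isL S true true true c }

/-- `[A V C]`, the second summand of `Q⁷`. -/
def Qg7b (S : Finset ℕ) : Language Sig := { w | ∃ c, w = [c] ∧ isL S true true false c }

/-- `[A H C]`, the first summand of `Q⁸`. -/
def Qg8a (S : Finset ℕ) : Language Sig := { w | ∃ c, w = [c] ∧ isL S true false false c }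

/-- `[A H W]`, the second summand of `Q⁸`. -/
def Qg8b (S : Finset ℕ) : Language Sig := { w | ∃ c, w = [c] ∧ isL S true false true c }

/-- `𝒬_good`, the set of 8 good languages. -/
def Qgood (S : Finset ℕ) : Set (Language Sig) :=
  {Qg1, Qg2, Qg3a S + Qg3b S, Qg4a S + Qg4b S, Qg5a S + Qg5b S,
   Qg6a S + Qg6b S, Qg7a S + Qg7b S, Qg8a S + Qg8b S}

/-- `β (Σ_{s ∈ 𝒮∖{black}} [A V W s]) Σ₀* ω`. -/
def Qbad1 (S : Finset ℕ) : Language Sig :=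
  { w | ∃ s u, s ∈ S ∧ s ≠ 0 ∧ allS0 S u ∧
      w = Sig.beta :: Sig.base true true true s :: (u ++ [Sig.omega]) }

/-- `β Σ₀* (Σ_{s ∈ 𝒮∖{black}} [B H W s]) ω`. -/
def Qbad2 (S : Finset ℕ) : Language Sig :=
  { w | ∃ s u, s ∈ S ∧ s ≠ 0 ∧ allS0 S u ∧
      w = Sig.beta :: (u ++ [Sig.base false false true s, Sig.omega]) }

/-- `β Σ₀* [• d W s][• d' W s'] Σ₀* ω`, for a forbidden pair `⟨(d,s),(d',s')⟩`. -/
def QbadF (S : Finset ℕ) (d : Bool) (s : ℕ) (d' : Bool) (s' : ℕ) : Language Sig :=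
  { w | ∃ u u', ∃ b b' : Bool, allS0 S u ∧ allS0 S u' ∧
      w = Sig.beta :: (u ++ Sig.base b d true s :: Sig.base b' d' true s' :: (u' ++ [Sig.omega])) }

/-- `𝒬_bad`. -/
def Qbad (S : Finset ℕ) (F : Finset ((Bool × ℕ) × (Bool × ℕ))) : Set (Language Sig) :=
  {Qbad1 S, Qbad2 S} ∪ { L | ∃ p ∈ F, L = QbadF S p.1.1 p.1.2 p.2.1 p.2.2 }

/-- `α Σ₀* [• • W] Σ₀* ω`. -/
def Qugly1 (S : Finset ℕ) : Language Sig :=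
  { w | ∃ u c u', allS0 S u ∧ allS0 S u' ∧ inSigma0 S c ∧
      (∃ ab d s, c = Sig.base ab d true s) ∧
      w = Sig.alpha :: (u ++ c :: (u' ++ [Sig.omega])) }

/-- `β Σ₀* [• • C] Σ₀* ω`. -/
def Qugly2 (S : Finset ℕ) : Language Sig :=
  { w | ∃ u c u', allS0 S u ∧ allS0 S u' ∧ inSigma0 S c ∧
      (∃ ab d s, c = Sig.base ab d false s) ∧
      w = Sig.beta :: (u ++ c :: (u' ++ [Sig.omega])) }

/-- `𝒬_ugly`. -/
def Qugly (S : Finset ℕ) : Set (Language Sig) := {Qugly1 S, Qugly2 S}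

/-- `𝒬 = 𝒬_good ∪ 𝒬_bad ∪ 𝒬_ugly`. -/
def QQ (S : Finset ℕ) (F : Finset ((Bool × ℕ) × (Bool × ℕ))) : Set (Language Sig) :=
  Qgood S ∪ Qbad S F ∪ Qugly S

/-- `[A H C][B V C]`, the repeated block of `Q_start`. -/
def startBlock (S : Finset ℕ) : Language Sig :=
  { w | ∃ c1 c2, w = [c1, c2] ∧ isL S true false false c1 ∧ isL S false true false c2 }

/-- `Q_start = α ([A H C][B V C])⁺ ω`. -/
def Qstart (S : Finset ℕ) : Language Sig :=
  { w | ∃ u, u ∈ KStar.kstar (startBlock S) ∧ u ≠ [] ∧ w = Sig.alpha :: (u ++ [Sig.omega]) }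

/-- The sum of the languages `QbadF` over all forbidden pairs of `F`. -/
def QbadFSum (S : Finset ℕ) (F : Finset ((Bool × ℕ) × (Bool × ℕ))) : Language Sig :=
  { w | ∃ p ∈ F, w ∈ QbadF S p.1.1 p.1.2 p.2.1 p.2.2 }

/-- `Q₀ = Q_start + Σ_{L ∈ 𝒬_bad ∪ 𝒬_ugly} L`. -/
def Q0L (S : Finset ℕ) (F : Finset ((Bool × ℕ) × (Bool × ℕ))) : Language Sig :=
  Qstart S + Qbad1 S + Qbad2 S + QbadFSum S F + Qugly1 S + Qugly2 S

/-- The alphabet `Σ = {α, β, ω} ∪ Σ₀` of the reduction, as a set of letters. -/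
def SigAlph (S : Finset ℕ) : Set Sig :=
  {Sig.alpha, Sig.beta, Sig.omega} ∪ { c | inSigma0 S c }


/-! ### Auxiliary lemmas for Statement 14. -/

lemma chainOf_nil' {V γ : Type} (w : List γ) (p : V) (c : γ) (q : V) :
    chainOf [] w p c q ↔ False := Iff.rfl

lemma chainOf_one' {V γ : Type} (u : V) (w : List γ) (p : V) (c : γ) (q : V) :
    chainOf [u] w p c q ↔ False := Iff.rfl

lemma chainOf_nilw' {V γ : Type} (u v : V) (vs : List V) (p : V) (c : γ) (q : V) :
    chainOf (u :: v :: vs) [] p c q ↔ False := Iff.rfl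

lemma chainOf_nilw'' {V γ : Type} (l : List V) (p : V) (c : γ) (q : V) :
    chainOf l [] p c q ↔ False := by
  rcases l with _ | ⟨u, _ | ⟨v, vs⟩⟩ <;> exact Iff.rfl

lemma chainOf_cc' {V γ : Type} (u v : V) (vs : List V) (d : γ) (w : List γ) (p : V) (c : γ)
    (q : V) : chainOf (u :: v :: vs) (d :: w) p c q ↔
      ((p = u ∧ c = d ∧ q = v) ∨ chainOf (v :: vs) w p c q) := Iff.rfl

lemma chainOf_mem' {V γ : Type} : ∀ (nodes : List V) (w : List γ) {p : V} {c : γ} {q : V},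
    chainOf nodes w p c q → c ∈ w := by
  intro nodes
  induction nodes with
  | nil => intro w p c q h; simp [chainOf_nil', chainOf_one', chainOf_nilw', chainOf_cc'] at h
  | cons u rest ih =>
    cases rest with
    | nil => intro w p c q h; cases w <;> simp [chainOf_nil', chainOf_one', chainOf_nilw', chainOf_cc'] at h
    | cons v vs =>
      intro w p c q h
      cases w with
      | nil => simp [chainOf_nil', chainOf_one', chainOf_nilw', chainOf_cc'] at h
      | cons c0 w' =>
        simp only [chainOf_nil', chainOf_one', chainOf_nilw', chainOf_cc'] at h
        rcases h with ⟨_, rfl, _⟩ | h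
        · exact List.mem_cons_self
        · exact List.mem_cons_of_mem _ (ih _ h)

lemma chainOf_first {V γ : Type} (P : γ → Prop) :
    ∀ (vs : List V) (w : List γ) (x : V) {p : V} {c : γ} {q : V},
      chainOf (x :: vs) w p c q → (∀ c' ∈ w.tail, ¬ P c') → P c → p = x := by
  intro vs w x p c q h htail hP
  cases vs with
  | nil => cases w <;> simp [chainOf_nil', chainOf_one', chainOf_nilw', chainOf_cc'] at h
  | cons v vs' =>
    cases w with
    | nil => simp [chainOf_nil', chainOf_one', chainOf_nilw', chainOf_cc'] at h
    | cons c0 w' =>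
      simp only [chainOf_nil', chainOf_one', chainOf_nilw', chainOf_cc'] at h
      rcases h with ⟨rfl, _, _⟩ | h
      · rfl
      · exact absurd hP (htail c (chainOf_mem' _ _ h))

lemma chainOf_last {V γ : Type} (P : γ → Prop) :
    ∀ (w : List γ) (nodes : List V) (y : V) {p : V} {c : γ} {q : V},
      nodes.length = w.length → chainOf (nodes ++ [y]) w p c q →
      (∀ c' ∈ w.dropLast, ¬ P c') → P c → q = y := by
  intro w
  induction w with
  | nil =>
    intro nodes y p c q hl h _ _
    have : nodes = [] := List.length_eq_zero_iff.mp hl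
    subst this
    simp [chainOf_nil', chainOf_one', chainOf_nilw', chainOf_cc'] at h
  | cons c0 w' ih =>
    intro nodes y p c q hl h hdrop hP
    cases nodes with
    | nil => simp at hl
    | cons u nodes' =>
      simp only [List.length_cons, Nat.add_right_cancel_iff] at hl
      cases nodes' with
      | nil =>
        have hw' : w' = [] := List.length_eq_zero_iff.mp hl.symm
        subst hw'
        simp only [List.nil_append, List.cons_append, chainOf_nil', chainOf_one', chainOf_nilw', chainOf_cc'] at h
        rcases h with ⟨_, _, rfl⟩ | h
        · rfl
        · simp [chainOf_nil', chainOf_one', chainOf_nilw', chainOf_cc'] at h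
      | cons v ns =>
        simp only [List.cons_append, chainOf_nil', chainOf_one', chainOf_nilw', chainOf_cc'] at h
        rcases h with ⟨_, rfl, _⟩ | h
        · exfalso
          have hw' : w' ≠ [] := by
            intro hh; subst hh; simp at hl
          refine hdrop c ?_ hP
          rw [List.dropLast_cons_of_ne_nil hw']
          exact List.mem_cons_self
        · refine ih (v :: ns) y ?_ h ?_ hP
          · simpa using hl
          · intro c' hc'
            refine hdrop c' ?_
            have hw' : w' ≠ [] := by
              intro hh; subst hh; simp [chainOf_nilw''] at h
            rw [List.dropLast_cons_of_ne_nil hw']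
            exact List.mem_cons_of_mem _ hc'

lemma pathSat_first {V γ : Type} {D : DB V γ} {x y : V} {c : γ} {w : List γ}
    (h : pathSat D x (c :: w) y) : ∃ z, D x c z := by
  obtain ⟨z, hz, _⟩ := h; exact ⟨z, hz⟩

lemma pathSat_last {V γ : Type} {D : DB V γ} (c : γ) :
    ∀ (w : List γ) (x y : V), pathSat D x (w ++ [c]) y → ∃ z, D z c y := by
  intro w
  induction w with
  | nil =>
    rintro x y ⟨z, hz, hzy⟩
    cases hzy; exact ⟨x, hz⟩
  | cons d w' ih =>
    rintro x y ⟨z, _, hz⟩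
    exact ih z y hz

/-! Letter classes and word-shape classes. -/

def isAB (c : Sig) : Prop := c = Sig.alpha ∨ c = Sig.beta

def isBase (c : Sig) : Prop := ∃ b d t s, c = Sig.base b d t s

def C1L (L : Language Sig) : Prop :=
  ∀ w ∈ L, ∃ c u, isAB c ∧ (∀ d ∈ u, isBase d) ∧ w = c :: u ++ [Sig.omega]

def C2L (L : Language Sig) : Prop := ∀ w ∈ L, ∃ c, isAB c ∧ w = [c]

def C3L (L : Language Sig) : Prop := ∀ w ∈ L, w = [Sig.omega]

def C4L (L : Language Sig) : Prop := ∀ w ∈ L, ∀ c ∈ w, isBase c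

lemma isL_isBase {S : Finset ℕ} {ab d t : Bool} {c : Sig} (h : isL S ab d t c) : isBase c := by
  obtain ⟨s, _, rfl⟩ := h; exact ⟨ab, d, t, s, rfl⟩

lemma inSigma0_isBase {S : Finset ℕ} {c : Sig} (h : inSigma0 S c) : isBase c := by
  cases c with
  | base b d t s => exact ⟨b, d, t, s, rfl⟩
  | alpha => simp [inSigma0] at h
  | beta => simp [inSigma0] at h
  | omega => simp [inSigma0] at h

lemma base_ne_ab {d : Sig} (h : isBase d) (col cb : Bool) :
    ¬((cb, d) = (col, Sig.alpha) ∨ (cb, d) = (col, Sig.beta)) := by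
  obtain ⟨b1, d1, t1, s1, rfl⟩ := h
  rintro (h | h) <;> simp at h

lemma omega_ne_ab (col cb : Bool) :
    ¬(((cb, Sig.omega) : Bool × Sig) = (col, Sig.alpha) ∨
        ((cb, Sig.omega) : Bool × Sig) = (col, Sig.beta)) := by
  rintro (h | h) <;> simp at h

lemma base_ne_om {d : Sig} (h : isBase d) (col cb : Bool) :
    ((cb, d) : Bool × Sig) ≠ (col, Sig.omega) := by
  obtain ⟨b1, d1, t1, s1, rfl⟩ := h
  intro h; simp at h

lemma ab_ne_om {d : Sig} (h : isAB d) (col cb : Bool) :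
    ((cb, d) : Bool × Sig) ≠ (col, Sig.omega) := by
  rcases h with rfl | rfl <;> (intro h; simp at h)

/-- Shape classification of all languages of `𝒬`. -/
lemma shape_QQ {S : Finset ℕ} {F : Finset ((Bool × ℕ) × (Bool × ℕ))} :
    ∀ L ∈ QQ S F, C1L L ∨ C2L L ∨ C3L L ∨ C4L L := by
  intro L hL
  rcases hL with (hg | hb) | hu
  · rw [Qgood] at hg
    simp only [Set.mem_insert_iff, Set.mem_singleton_iff] at hg
    rcases hg with rfl | rfl | rfl | rfl | rfl | rfl | rfl | rfl
    · exact Or.inr (Or.inr (Or.inl (fun w hw => hw)))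
    · refine Or.inr (Or.inl (fun w hw => ?_))
      rcases hw with rfl | rfl
      exacts [⟨_, Or.inl rfl, rfl⟩, ⟨_, Or.inr rfl, rfl⟩]
    · refine Or.inr (Or.inr (Or.inr (fun w hw d hd => ?_)))
      rcases hw with ⟨c1, c2, rfl, hA, hB⟩ | ⟨c1, c2, rfl, hA, hB⟩ <;>
        (simp only [List.mem_cons, List.not_mem_nil, or_false] at hd;
         rcases hd with rfl | rfl)
      exacts [isL_isBase hA, isL_isBase hB, isL_isBase hA, isL_isBase hB]
    · refine Or.inr (Or.inr (Or.inr (fun w hw d hd => ?_)))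
      rcases hw with ⟨c1, c2, rfl, hA, hB⟩ | ⟨c1, c2, rfl, hA, hB⟩ <;>
        (simp only [List.mem_cons, List.not_mem_nil, or_false] at hd;
         rcases hd with rfl | rfl)
      exacts [isL_isBase hA, isL_isBase hB, isL_isBase hA, isL_isBase hB]
    · refine Or.inr (Or.inr (Or.inr (fun w hw d hd => ?_)))
      rcases hw with ⟨c1, rfl, hA⟩ | ⟨c1, rfl, hA⟩ <;>
        (simp only [List.mem_cons, List.not_mem_nil, or_false] at hd; subst hd)
      exacts [isL_isBase hA, isL_isBase hA]
    · refine Or.inr (Or.inr (Or.inr (fun w hw d hd => ?_)))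
      rcases hw with ⟨c1, rfl, hA⟩ | ⟨c1, rfl, hA⟩ <;>
        (simp only [List.mem_cons, List.not_mem_nil, or_false] at hd; subst hd)
      exacts [isL_isBase hA, isL_isBase hA]
    · refine Or.inr (Or.inr (Or.inr (fun w hw d hd => ?_)))
      rcases hw with ⟨c1, rfl, hA⟩ | ⟨c1, rfl, hA⟩ <;>
        (simp only [List.mem_cons, List.not_mem_nil, or_false] at hd; subst hd)
      exacts [isL_isBase hA, isL_isBase hA]
    · refine Or.inr (Or.inr (Or.inr (fun w hw d hd => ?_)))
      rcases hw with ⟨c1, rfl, hA⟩ | ⟨c1, rfl, hA⟩ <;>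
        (simp only [List.mem_cons, List.not_mem_nil, or_false] at hd; subst hd)
      exacts [isL_isBase hA, isL_isBase hA]
  · simp only [Qbad, Set.mem_union, Set.mem_insert_iff, Set.mem_singleton_iff,
      Set.mem_setOf_eq] at hb
    rcases hb with (rfl | rfl) | ⟨p, hp, rfl⟩
    · refine Or.inl (fun w hw => ?_)
      obtain ⟨s, u, _, _, hu, rfl⟩ := hw
      refine ⟨Sig.beta, Sig.base true true true s :: u, Or.inr rfl, ?_, by simp⟩
      intro d hd
      rcases List.mem_cons.mp hd with rfl | hd
      · exact ⟨_, _, _, _, rfl⟩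
      · exact inSigma0_isBase (hu d hd)
    · refine Or.inl (fun w hw => ?_)
      obtain ⟨s, u, _, _, hu, rfl⟩ := hw
      refine ⟨Sig.beta, u ++ [Sig.base false false true s], Or.inr rfl, ?_, by simp⟩
      intro d hd
      rcases List.mem_append.mp hd with hd | hd
      · exact inSigma0_isBase (hu d hd)
      · simp only [List.mem_singleton] at hd; subst hd; exact ⟨_, _, _, _, rfl⟩
    · refine Or.inl (fun w hw => ?_)
      obtain ⟨u, u', b1, b2, hu, hu', rfl⟩ := hw
      refine ⟨Sig.beta, u ++ Sig.base b1 p.1.1 true p.1.2 :: Sig.base b2 p.2.1 true p.2.2 :: u',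
        Or.inr rfl, ?_, by simp⟩
      intro d hd
      rcases List.mem_append.mp hd with hd | hd
      · exact inSigma0_isBase (hu d hd)
      · rcases List.mem_cons.mp hd with rfl | hd
        · exact ⟨_, _, _, _, rfl⟩
        · rcases List.mem_cons.mp hd with rfl | hd
          · exact ⟨_, _, _, _, rfl⟩
          · exact inSigma0_isBase (hu' d hd)
  · rcases hu with rfl | rfl
    · refine Or.inl (fun w hw => ?_)
      obtain ⟨u, c0, u', hu, hu', hc0, _, rfl⟩ := hw
      refine ⟨Sig.alpha, u ++ c0 :: u', Or.inl rfl, ?_, by simp⟩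
      intro d hd
      rcases List.mem_append.mp hd with hd | hd
      · exact inSigma0_isBase (hu d hd)
      · rcases List.mem_cons.mp hd with rfl | hd
        · exact inSigma0_isBase hc0
        · exact inSigma0_isBase (hu' d hd)
    · refine Or.inl (fun w hw => ?_)
      obtain ⟨u, c0, u', hu, hu', hc0, _, rfl⟩ := hw
      refine ⟨Sig.beta, u ++ c0 :: u', Or.inr rfl, ?_, by simp⟩
      intro d hd
      rcases List.mem_append.mp hd with hd | hd
      · exact inSigma0_isBase (hu d hd)
      · rcases List.mem_cons.mp hd with rfl | hd
        · exact inSigma0_isBase hc0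
        · exact inSigma0_isBase (hu' d hd)

/-- The invariant. -/
def InvAB {V : Type} (a b : V) (D : DB V (Bool × Sig)) : Prop :=
  (∀ x y (col : Bool), D x (col, Sig.alpha) y ∨ D x (col, Sig.beta) y → x = a) ∧
  (∀ x y (col : Bool), D x (col, Sig.omega) y → y = b)

/-- Edges of a chain labeled by (a coloring of) a word of shape `C1`. -/
lemma chainC1 {V : Type} {x y : V} {vs : List V} {cb : Bool}
    {c0 : Sig} {u : List Sig} (hc0 : isAB c0) (hu : ∀ d ∈ u, isBase d)
    (hlen : vs.length + 1 = ((c0 :: u ++ [Sig.omega]).map (fun d => (cb, d))).length) :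
    ∀ p c q, chainOf (x :: vs ++ [y]) ((c0 :: u ++ [Sig.omega]).map (fun d => (cb, d))) p c q →
      (∀ col : Bool, (c = (col, Sig.alpha) ∨ c = (col, Sig.beta)) → p = x) ∧
      (∀ col : Bool, c = (col, Sig.omega) → q = y) := by
  intro p c q hch
  constructor
  · intro col hc
    refine chainOf_first (fun cc => cc = (col, Sig.alpha) ∨ cc = (col, Sig.beta)) _ _ _
      hch ?_ hc
    intro c' hc'
    have hc'' : c' ∈ (u ++ [Sig.omega]).map (fun d => ((cb, d) : Bool × Sig)) := by
      simpa using hc'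
    obtain ⟨d, hd, rfl⟩ := List.mem_map.mp hc''
    rcases List.mem_append.mp hd with hd | hd
    · exact base_ne_ab (hu d hd) col cb
    · simp only [List.mem_singleton] at hd; subst hd; exact omega_ne_ab col cb
  · intro col hc
    refine chainOf_last (fun cc => cc = (col, Sig.omega)) _ (x :: vs) y ?_ hch ?_ hc
    · simpa using hlen
    · intro c' hc'
      have hrw : (c0 :: u ++ [Sig.omega]).map (fun d => ((cb, d) : Bool × Sig)) =
          ((c0 :: u).map (fun d => (cb, d))) ++ [(cb, Sig.omega)] := by simp
      rw [hrw, List.dropLast_concat] at hc'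
      obtain ⟨d, hd, rfl⟩ := List.mem_map.mp hc'
      rcases List.mem_cons.mp hd with rfl | hd
      · exact ab_ne_om hc0 col cb
      · exact base_ne_om (hu d hd) col cb

/-- The core lemma: edges of a chain added for a request on a language of `𝒬`. -/
lemma core {V : Type} {a b : V} {D : DB V (Bool × Sig)} (hInv : InvAB a b D)
    {L : Language Sig} (hL : C1L L ∨ C2L L ∨ C3L L ∨ C4L L)
    {x y : V} {vs : List V} {cb ca : Bool} {v v' : List Sig}
    (hv' : v' ∈ L)
    (hlen : vs.length + 1 = (v'.map (fun d => ((cb, d) : Bool × Sig))).length)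
    (hv : v ∈ L) (hpath : pathSat D x (v.map (fun d => ((ca, d) : Bool × Sig))) y) :
    ∀ p c q, chainOf (x :: vs ++ [y]) (v'.map (fun d => (cb, d))) p c q →
      (∀ col : Bool, (c = (col, Sig.alpha) ∨ c = (col, Sig.beta)) → p = a) ∧
      (∀ col : Bool, c = (col, Sig.omega) → q = b) := by
  intro p c q hch
  rcases hL with h1 | h2 | h3 | h4
  · obtain ⟨c0, u, hc0, hu, rfl⟩ := h1 v' hv'
    obtain ⟨c1, u1, hc1, hu1, rfl⟩ := h1 v hv
    have hxa : x = a := by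
      obtain ⟨z, hz⟩ := pathSat_first
        (show pathSat D x ((ca, c1) :: (u1 ++ [Sig.omega]).map (fun d => (ca, d))) y by
          simpa using hpath)
      rcases hc1 with rfl | rfl
      · exact hInv.1 x z ca (Or.inl hz)
      · exact hInv.1 x z ca (Or.inr hz)
    have hyb : y = b := by
      obtain ⟨z, hz⟩ := pathSat_last ((ca, Sig.omega) : Bool × Sig)
        (((c1 :: u1).map (fun d => (ca, d)))) x y (by simpa using hpath)
      exact hInv.2 z y ca hz
    obtain ⟨H1, H2⟩ := chainC1 hc0 hu hlen p c q hch
    exact ⟨fun col hc => hxa ▸ H1 col hc, fun col hc => hyb ▸ H2 col hc⟩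
  · obtain ⟨c0, hc0, rfl⟩ := h2 v' hv'
    obtain ⟨c1, hc1, rfl⟩ := h2 v hv
    have hxa : x = a := by
      obtain ⟨z, hz⟩ := pathSat_first (show pathSat D x [((ca, c1) : Bool × Sig)] y from hpath)
      rcases hc1 with rfl | rfl
      · exact hInv.1 x z ca (Or.inl hz)
      · exact hInv.1 x z ca (Or.inr hz)
    have hcc : c = (cb, c0) := by
      have := chainOf_mem' _ _ hch
      simpa using this
    constructor
    · intro col hc
      rw [← hxa]
      exact chainOf_first (fun cc => cc = (col, Sig.alpha) ∨ cc = (col, Sig.beta)) _ _ _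
        hch (by simp) hc
    · intro col hc
      exact absurd (hcc ▸ hc) (ab_ne_om hc0 col cb)
  · have hv'3 := h3 v' hv'
    have hv3 := h3 v hv
    subst hv'3; subst hv3
    have hyb : y = b := by
      obtain ⟨z, hz, hzy⟩ := (show pathSat D x [((ca, Sig.omega) : Bool × Sig)] y from hpath)
      cases hzy
      exact hInv.2 x y ca hz
    have hcc : c = (cb, Sig.omega) := by
      have := chainOf_mem' _ _ hch
      simpa using this
    constructor
    · intro col hc
      exact absurd (hcc ▸ hc) (omega_ne_ab col cb)
    · intro col hc
      rw [← hyb]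
      exact chainOf_last (fun cc => cc = (col, Sig.omega)) _ (x :: vs) y
        (by simpa using hlen) hch (by simp) hc
  · have := chainOf_mem' _ _ hch
    obtain ⟨d, hd, rfl⟩ := List.mem_map.mp this
    exact ⟨fun col hc => absurd hc (base_ne_ab (h4 v' hv' d hd) col cb),
      fun col hc => absurd hc (base_ne_om (h4 v' hv' d hd) col cb)⟩

/-- The invariant is preserved by `Step`. -/
lemma step_inv {S : Finset ℕ} {F : Finset ((Bool × ℕ) × (Bool × ℕ))} {V : Type}
    {a b : V} {D D' : DB V (Bool × Sig)}
    (hInv : InvAB a b D) (hstep : Step (biRC (QQ S F)) D D') : InvAB a b D' := by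
  obtain ⟨wch, vch, h1, _h2, h3⟩ := hstep
  have key : ∀ r ∈ rq (biRC (QQ S F)) D, ∀ p c q,
      chainOf (r.1 :: vch r ++ [r.2.1]) (wch r) p c q →
      (∀ col : Bool, (c = (col, Sig.alpha) ∨ c = (col, Sig.beta)) → p = a) ∧
      (∀ col : Bool, c = (col, Sig.omega) → q = b) := by
    intro r hr
    have ht := hr.1
    have hlhs := hr.2.1
    obtain ⟨hw, hlen, -, -⟩ := h1 r hr
    rcases ht with ⟨L, hLQ, hEq⟩ | ⟨L, hLQ, hEq⟩
    · rw [← hEq] at hw hlhs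
      obtain ⟨v', hv', hwv'⟩ := hw
      obtain ⟨w0, hw0mem, hpath⟩ := hlhs
      obtain ⟨v, hvL, hw0⟩ := hw0mem
      subst hw0
      rw [← hwv'] at hlen ⊢
      exact core hInv (shape_QQ L hLQ) hv' hlen hvL hpath
    · rw [← hEq] at hw hlhs
      obtain ⟨v', hv', hwv'⟩ := hw
      obtain ⟨w0, hw0mem, hpath⟩ := hlhs
      obtain ⟨v, hvL, hw0⟩ := hw0mem
      subst hw0
      rw [← hwv'] at hlen ⊢
      exact core hInv (shape_QQ L hLQ) hv' hlen hvL hpath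
  constructor
  · rintro x y col (h | h)
    · rcases (h3 x (col, Sig.alpha) y).mp h with h | ⟨r, hr, hc⟩
      · exact hInv.1 x y col (Or.inl h)
      · exact (key r hr x _ y hc).1 col (Or.inl rfl)
    · rcases (h3 x (col, Sig.beta) y).mp h with h | ⟨r, hr, hc⟩
      · exact hInv.1 x y col (Or.inr h)
      · exact (key r hr x _ y hc).1 col (Or.inr rfl)
  · intro x y col h
    rcases (h3 x (col, Sig.omega) y).mp h with h | ⟨r, hr, hc⟩
    · exact hInv.2 x y col h
    · exact (key r hr x _ y hc).2 col rfl

/-- The invariant holds in the initial position. -/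
lemma base_inv {V : Type} {a b : V} {D : DB V (Bool × Sig)}
    {q : List Sig} {S : Finset ℕ} (hq : q ∈ Qstart S)
    (hD : IsChainStruct D a (greenW q) b) : InvAB a b D := by
  obtain ⟨u, hku, hne, rfl⟩ := hq
  have hubase : ∀ d ∈ u, isBase d := by
    obtain ⟨Ls, rfl, hLs⟩ := Language.mem_kstar.mp hku
    intro d hd
    obtain ⟨w, hwLs, hdw⟩ := List.mem_flatten.mp hd
    obtain ⟨c1, c2, rfl, hA, hB⟩ := hLs w hwLs
    simp only [List.mem_cons, List.not_mem_nil, or_false] at hdw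
    rcases hdw with rfl | rfl
    exacts [isL_isBase hA, isL_isBase hB]
  obtain ⟨vs, hlen, _, hiff⟩ := hD
  have hch := chainC1 (x := a) (y := b) (vs := vs) (cb := true)
    (c0 := Sig.alpha) (u := u) (Or.inl rfl) hubase (by simpa [greenW] using hlen)
  constructor
  · rintro x y col (h | h)
    · exact (hch x (col, Sig.alpha) y (by simpa [greenW] using (hiff x _ y).mp h)).1
        col (Or.inl rfl)
    · exact (hch x (col, Sig.beta) y (by simpa [greenW] using (hiff x _ y).mp h)).1
        col (Or.inr rfl)
  · intro x y col h
    exact (hch x (col, Sig.omega) y (by simpa [greenW] using (hiff x _ y).mp h)).2 col rfl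

/-- In every final position of a play of `Escape(Q₀, 𝒬)` started from
`D₀ = (G(q))[a,b]` with `q ∈ Q_start` : (1) every edge labeled `G(α)`, `R(α)`, `G(β)` or
`R(β)` begins in `a`; (2) every edge labeled `G(ω)` or `R(ω)` ends in `b`. -/
theorem alpha_beta_omega_edges (S : Finset ℕ) (F : Finset ((Bool × ℕ) × (Bool × ℕ)))
    (hS : 0 ∈ S) (hF : ∀ p ∈ F, p.1.2 ∈ S ∧ p.2.2 ∈ S)
    {V : Type} (a b : V) (q : List Sig) (hq : q ∈ Qstart S)
    (D₀ H : DB V (Bool × Sig)) (hD₀ : IsChainStruct D₀ a (greenW q) b)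
    (hH : FinalPos (biRC (QQ S F)) D₀ H) :
    (∀ x y (col : Bool), H x (col, Sig.alpha) y ∨ H x (col, Sig.beta) y → x = a) ∧
    (∀ x y (col : Bool), H x (col, Sig.omega) y → y = b) := by
  obtain ⟨seq, hseq0, hstep, hHiff⟩ := hH
  have hInv : ∀ i, InvAB a b (seq i) := by
    intro i
    induction i with
    | zero => rw [hseq0]; exact base_inv hq hD₀
    | succ i ih => exact step_inv ih (hstep i)
  constructor
  · rintro x y col (h | h)
    · obtain ⟨i, hi⟩ := (hHiff x _ y).mp h
      exact (hInv i).1 x y col (Or.inl hi)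
    · obtain ⟨i, hi⟩ := (hHiff x _ y).mp h
      exact (hInv i).1 x y col (Or.inr hi)
  · intro x y col h
    obtain ⟨i, hi⟩ := (hHiff x _ y).mp h
    exact (hInv i).2 x y col hi
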